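/- If $r$ is a prime and $G$ is a nontrivial finite abelian group, then $\mathrm{Prob}_r(G) = 1/r^k$ for some integer $k \geq 0$. -/
import Mathlib

theorem stmt_3 (G : Type*) [CommGroup G] [Fintype G] [Nontrivial G] (r : ℕ) (hr : r.Prime) :
    ∃ k : ℕ, (Set.ncard {x : G | ∃ g : G, g ^ r = x} : ℝ) / (Nat.card G : ℝ) =
      1 / (r : ℝ) ^ k := by
  haveI : Fact r.Prime := ⟨hr⟩
  set f : G →* G := powMonoidHom r with hf
  have hset : {x : G | ∃ g : G, g ^ r = x} = Set.range f := by
    ext x; simp [hf, powMonoidHom, eq_comm]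
  have hker : IsPGroup r f.ker := fun g => ⟨1, by
    have := g.2
    simp only [MonoidHom.mem_ker, hf, powMonoidHom_apply] at this
    ext; simpa using this⟩
  obtain ⟨k, hk⟩ := hker.exists_card_eq
  refine ⟨k, ?_⟩
  have hcard : Nat.card f.range * Nat.card f.ker = Nat.card G := by
    rw [Subgroup.card_eq_card_quotient_mul_card_subgroup f.ker,
      Nat.card_congr (QuotientGroup.quotientKerEquivRange f).toEquiv]
  have hncard : {x : G | ∃ g : G, g ^ r = x}.ncard = Nat.card f.range := by
    rw [hset]
    rw [← Nat.card_coe_set_eq, ← MonoidHom.coe_range]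
    rfl
  rw [hncard, ← hcard, hk]
  have h0 : (0:ℝ) < (r:ℝ) ^ k := by
    have := hr.pos; positivity
  have h1 : (0:ℝ) < (Nat.card f.range : ℝ) := by
    have : 0 < Nat.card f.range := Nat.card_pos
    exact_mod_cast this
  push_cast
  rw [div_mul_eq_div_div]
  rw [div_self (ne_of_gt h1), one_div]
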